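/- Let K be a function field over a constant field G_p algebraic over F_p, with G_p containing a primitive q-th root of unity and admitting a cyclic extension of degree q (q prime ≠ char K). Let 𝔭 be a prime of K with ord_𝔭 t ≥ 0, where t ∈ K has pole 𝔭_∞ with ramification degree e over G_p(t). Then for every sufficiently large positive integer n there exists b ∈ K such that b is not a q-th power modulo 𝔭 and ord_{𝔭_∞} b = -ne. -/

import Mathlib

section helpers
variable {K : Type*} [Field K]

lemma val_one' (v : K → ℤ) (hmul : ∀ x y : K, x ≠ 0 → y ≠ 0 → v (x * y) = v x + v y) :
    v 1 = 0 := by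
  have h := hmul 1 1 one_ne_zero one_ne_zero
  rw [mul_one] at h; linarith

lemma val_neg' (v : K → ℤ) (hmul : ∀ x y : K, x ≠ 0 → y ≠ 0 → v (x * y) = v x + v y)
    {x : K} (hx : x ≠ 0) : v (-x) = v x := by
  have h1 : v (-1 : K) = 0 := by
    have h := hmul (-1) (-1) (by norm_num) (by norm_num)
    rw [neg_mul_neg, one_mul, val_one' v hmul] at h
    linarith
  have := hmul (-1) x (by norm_num) hx
  rw [neg_one_mul] at this
  rw [this, h1, zero_add]

lemma val_pow' (v : K → ℤ) (hmul : ∀ x y : K, x ≠ 0 → y ≠ 0 → v (x * y) = v x + v y)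
    {x : K} (hx : x ≠ 0) (k : ℕ) : v (x ^ k) = k * v x := by
  induction k with
  | zero => simpa using val_one' v hmul
  | succ k ih =>
      rw [pow_succ, hmul _ _ (pow_ne_zero _ hx) hx, ih]
      push_cast; ring

lemma val_add_lt' (v : K → ℤ) (hmul : ∀ x y : K, x ≠ 0 → y ≠ 0 → v (x * y) = v x + v y)
    (hadd : ∀ x y : K, x ≠ 0 → y ≠ 0 → x + y ≠ 0 → min (v x) (v y) ≤ v (x + y))
    {x y : K} (hx : x ≠ 0) (hy : y ≠ 0) (hlt : v x < v y) :
    x + y ≠ 0 ∧ v (x + y) = v x := by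
  have hne : x + y ≠ 0 := by
    intro h
    have : y = -x := by linear_combination h
    rw [this, val_neg' v hmul hx] at hlt
    exact lt_irrefl _ hlt
  refine ⟨hne, ?_⟩
  have h1 := hadd x y hx hy hne
  have h2 := hadd (x + y) (-y) hne (neg_ne_zero.mpr hy) (by simpa using hx)
  rw [add_neg_cancel_right, val_neg' v hmul hy] at h2
  omega

lemma val_sum' (v : K → ℤ)
    (hadd : ∀ x y : K, x ≠ 0 → y ≠ 0 → x + y ≠ 0 → min (v x) (v y) ≤ v (x + y))
    (c : ℤ) {ι : Type*} (s : Finset ι) (f : ι → K)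
    (hf : ∀ i ∈ s, f i ≠ 0 → c ≤ v (f i)) (hs : ∑ i ∈ s, f i ≠ 0) :
    c ≤ v (∑ i ∈ s, f i) := by
  induction s using Finset.cons_induction with
  | empty => simp at hs
  | cons a s ha ih =>
      rw [Finset.sum_cons] at hs ⊢
      by_cases h1 : f a = 0
      · rw [h1, zero_add] at hs ⊢
        exact ih (fun i hi => hf i (Finset.mem_cons_of_mem hi)) hs
      · by_cases h2 : ∑ i ∈ s, f i = 0
        · rw [h2, add_zero] at hs ⊢
          exact hf a (Finset.mem_cons_self _ _) h1
        · have := hadd (f a) _ h1 h2 hs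
          have ha' := hf a (Finset.mem_cons_self _ _) h1
          have hb' := ih (fun i hi => hf i (Finset.mem_cons_of_mem hi)) h2
          omega

end helpers

theorem stmt_19 (p q : ℕ) (hp : p.Prime) (hq : q.Prime) (hpq : p ≠ q)
    (F : Type*) [Field F] [CharP F p] (ξ : F) (hξ : IsPrimitiveRoot ξ q)
    (K : Type*) [Field K] [Algebra F K]
    (vp vinf : K → ℤ)
    (hpmul : ∀ x y : K, x ≠ 0 → y ≠ 0 → vp (x * y) = vp x + vp y)
    (hpadd : ∀ x y : K, x ≠ 0 → y ≠ 0 → x + y ≠ 0 → min (vp x) (vp y) ≤ vp (x + y))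
    (hpconst : ∀ a : F, a ≠ 0 → vp (algebraMap F K a) = 0)
    (himul : ∀ x y : K, x ≠ 0 → y ≠ 0 → vinf (x * y) = vinf x + vinf y)
    (hiadd : ∀ x y : K, x ≠ 0 → y ≠ 0 → x + y ≠ 0 → min (vinf x) (vinf y) ≤ vinf (x + y))
    (hiconst : ∀ a : F, a ≠ 0 → vinf (algebraMap F K a) = 0)
    (t : K) (htrans : ∀ g : Polynomial F, Polynomial.aeval t g = 0 → g = 0)
    (ht : 0 ≤ vp t)
    (e : ℕ) (he : 0 < e) (hvinft : vinf t = -(e : ℤ))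
    (P : Polynomial F) (hPmonic : P.Monic) (hPirr : Irreducible P)
    (hPbelow : 0 < vp (Polynomial.aeval t P))
    (b₀ : K) (hb₀ne : b₀ ≠ 0) (hb₀ : vp b₀ = 0)
    (hb₀q : ∀ y : K, 0 ≤ vp y → vp (b₀ - y ^ q) ≤ 0) :
    ∃ N : ℕ, ∀ n : ℕ, N ≤ n → ∃ b : K,
      vinf b = -((n * e : ℕ) : ℤ) ∧ vp b = 0 ∧
        ∀ y : K, 0 ≤ vp y → vp (b - y ^ q) ≤ 0 := by
  classical
  have htne : t ≠ 0 := by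
    intro h
    exact Polynomial.X_ne_zero (htrans Polynomial.X (by simp [h]))
  have hPne : P ≠ 0 := hPmonic.ne_zero
  set s : K := Polynomial.aeval t P with hsdef
  have hsne : s ≠ 0 := fun h => hPne (htrans P h)
  set d : ℕ := P.natDegree with hddef
  have hd1 : 1 ≤ d := by
    by_contra h
    have hd0 : d = 0 := by omega
    have : P = 1 := (Polynomial.Monic.natDegree_eq_zero hPmonic).mp hd0
    rw [hsdef, this] at hPbelow
    simp [val_one' vp hpmul] at hPbelow
  -- b₀ is not a q-th power of an integral element
  have hkey : ∀ y : K, 0 ≤ vp y → b₀ - y ^ q ≠ 0 := by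
    intro y hy hyq
    have hb : y ^ q = b₀ := by linear_combination -hyq
    have hyne : y ≠ 0 := by
      intro h; apply hb₀ne; rw [← hb, h, zero_pow hq.ne_zero]
    have hvyq : (q : ℤ) * vp y = 0 := by
      rw [← val_pow' vp hpmul hyne q, hb, hb₀]
    have hvy : vp y = 0 := by
      rcases mul_eq_zero.mp hvyq with h | h
      · exact absurd h (by exact_mod_cast hq.ne_zero)
      · exact h
    set u : K := 1 + s with hudef
    have hvu := val_add_lt' vp hpmul hpadd one_ne_zero hsne
      (by rw [val_one' vp hpmul]; exact hPbelow)
    have hune : u ≠ 0 := hvu.1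
    have hvu0 : vp u = 0 := by rw [hvu.2, val_one' vp hpmul]
    have huq : u ^ q ≠ 1 := by
      intro h
      have h0 : Polynomial.aeval t ((1 + P) ^ q - 1) = 0 := by
        simp only [map_sub, map_pow, map_add, map_one, ← hsdef, ← hudef, h, sub_self]
      have h2 := htrans _ h0
      have h3 : ((1 : Polynomial F) + P) ^ q = 1 := by linear_combination h2
      have hm : ((1 : Polynomial F) + P).Monic := by
        rw [add_comm]
        exact hPmonic.add_of_left (by
          rw [Polynomial.degree_one]
          exact Polynomial.natDegree_pos_iff_degree_pos.mp (by omega))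
      have h4 := congrArg Polynomial.natDegree h3
      rw [Polynomial.natDegree_pow, Polynomial.natDegree_one] at h4
      have h5 : (1 + P : Polynomial F).natDegree = d := by
        apply Polynomial.natDegree_eq_of_degree_eq
        apply Polynomial.degree_add_eq_right_of_degree_lt
        rw [Polynomial.degree_one]
        exact Polynomial.natDegree_pos_iff_degree_pos.mp (by omega)
      rw [h5] at h4
      have := hq.pos
      exact absurd h4 (by positivity)
    set w : K := ∑ i ∈ Finset.range q, u ^ i with hwdef
    have hgeom : w * s = u ^ q - 1 := by
      have := geom_sum_mul u q
      rw [← this, hwdef, hudef]; ring_nf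
    have huq1 : u ^ q - 1 ≠ 0 := sub_ne_zero.mpr huq
    have hwne : w ≠ 0 := by
      intro h; rw [h, zero_mul] at hgeom; exact huq1 hgeom.symm
    have hvw : 0 ≤ vp w := by
      refine val_sum' vp hpadd 0 _ _ (fun i _ hne => ?_) (by rw [← hwdef]; exact hwne)
      rw [val_pow' vp hpmul hune, hvu0]; simp
    have hvuq : 0 < vp (u ^ q - 1) := by
      rw [← hgeom, hpmul _ _ hwne hsne]
      omega
    have hvuq' : 0 < vp (1 - u ^ q) := by
      have : (1 : K) - u ^ q = -(u ^ q - 1) := by ring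
      rw [this, val_neg' vp hpmul huq1]; exact hvuq
    have hcontra := hb₀q (y * u) (by rw [hpmul _ _ hyne hune, hvy, hvu0]; norm_num)
    have heq : b₀ - (y * u) ^ q = y ^ q * (1 - u ^ q) := by
      rw [mul_pow, hb]; ring
    rw [heq, hpmul _ _ (pow_ne_zero _ hyne) (sub_ne_zero.mpr (Ne.symm huq)),
      val_pow' vp hpmul hyne, hvy] at hcontra
    omega
  -- lower bound on vinf of polynomial evaluations
  have hgbound : ∀ g : Polynomial F, Polynomial.aeval t g ≠ 0 →
      -(g.natDegree : ℤ) * e ≤ vinf (Polynomial.aeval t g) := by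
    intro g hg
    rw [Polynomial.aeval_eq_sum_range] at hg ⊢
    refine val_sum' vinf hiadd _ _ _ (fun i hi hne => ?_) hg
    rw [Algebra.smul_def] at hne ⊢
    have hc : g.coeff i ≠ 0 := by
      intro h; rw [h] at hne; simp at hne
    have hcK : algebraMap F K (g.coeff i) ≠ 0 := by
      intro h; exact hc ((algebraMap F K).injective (by rw [h, map_zero]))
    rw [himul _ _ hcK (pow_ne_zero _ htne), hiconst _ hc, val_pow' vinf himul htne, hvinft]
    have hi' : i ≤ g.natDegree := by
      have := Finset.mem_range.mp hi; omega
    have : (i : ℤ) ≤ (g.natDegree : ℤ) := by exact_mod_cast hi'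
    nlinarith [Int.ofNat_le.mpr he.le]
  -- vinf of s
  have hvinfs : vinf s = -(d : ℤ) * e := by
    set R : Polynomial F := P - Polynomial.X ^ d with hRdef
    have hsplit : s = t ^ d + Polynomial.aeval t R := by
      rw [hsdef, hRdef]; simp [map_sub, map_pow]
    have htd : vinf (t ^ d) = -(d : ℤ) * e := by
      rw [val_pow' vinf himul htne d, hvinft]; ring
    by_cases hR : R = 0
    · rw [hsplit, hR, map_zero, add_zero, htd]
    · have hRt : Polynomial.aeval t R ≠ 0 := fun h => hR (htrans R h)
      have hdegR : R.natDegree < d := by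
        apply Polynomial.natDegree_lt_natDegree hR
        rw [hRdef]
        calc (P - Polynomial.X ^ d).degree < P.degree := by
              apply Polynomial.degree_sub_lt
              · rw [Polynomial.degree_X_pow, Polynomial.degree_eq_natDegree hPne]
              · exact hPne
              · rw [hPmonic.leadingCoeff, (Polynomial.monic_X_pow d).leadingCoeff]
          _ ≤ P.degree := le_refl _
      have hlt : vinf (t ^ d) < vinf (Polynomial.aeval t R) := by
        have h1 := hgbound R hRt
        rw [htd]
        have : (R.natDegree : ℤ) < (d : ℤ) := by exact_mod_cast hdegR
        nlinarith [Int.ofNat_lt.mpr he]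
      have h2 := (val_add_lt' vinf himul hiadd (pow_ne_zero d htne) hRt hlt).2
      rw [hsplit, h2, htd]
  -- main construction
  refine ⟨d + (vinf b₀).natAbs + 1, fun n hn => ?_⟩
  set k : ℕ := n - d with hkdef
  have hkd : k + d = n := by omega
  have hts : t ^ k * s ≠ 0 := mul_ne_zero (pow_ne_zero _ htne) hsne
  have hvts : vinf (t ^ k * s) = -((n * e : ℕ) : ℤ) := by
    rw [himul _ _ (pow_ne_zero _ htne) hsne, val_pow' vinf himul htne, hvinft, hvinfs]
    push_cast
    rw [← hkd]
    push_cast; ring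
  have hvpts : 0 < vp (t ^ k * s) := by
    rw [hpmul _ _ (pow_ne_zero _ htne) hsne, val_pow' vp hpmul htne]
    nlinarith
  have hne' : (n : ℤ) ≤ (n : ℤ) * e := by nlinarith [Int.ofNat_le.mpr he]
  have hlt : vinf (t ^ k * s) < vinf b₀ := by
    rw [hvts]
    have h1 : -|vinf b₀| ≤ vinf b₀ := neg_abs_le _
    rw [Int.abs_eq_natAbs] at h1
    push_cast
    omega
  refine ⟨t ^ k * s + b₀, ?_, ?_, ?_⟩
  · rw [(val_add_lt' vinf himul hiadd hts hb₀ne hlt).2, hvts]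
  · have := (val_add_lt' vp hpmul hpadd hb₀ne hts (by omega)).2
    rw [add_comm, this, hb₀]
  · intro y hy
    have hz : b₀ - y ^ q ≠ 0 := hkey y hy
    have hvz : vp (b₀ - y ^ q) ≤ 0 := hb₀q y hy
    have heq : t ^ k * s + b₀ - y ^ q = (b₀ - y ^ q) + t ^ k * s := by ring
    rw [heq, (val_add_lt' vp hpmul hpadd hz hts (by omega)).2]
    exact hvz
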